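/- Let m, p, q ≥ 1 and let Q ∈ Q^m_{p,q}. Then every vertex v of Q has at most two outgoing arrows of color 0, counted with multiplicity: Σ_{j ∈ Q₀} q_{vj}^{(0)} ≤ 2. -/

import Mathlib

open Finset

open scoped Classical

namespace CM

variable {V : Type*}

/-- Raw data of an `m`-colored quiver: `Q i j c` is the number of arrows
from `i` to `j` with color `c`. -/
abbrev CQ (V : Type*) := V → V → ℕ → ℕ

/-- A colored quiver is simple if there is at most one arrow between distinct vertices. -/
def Simple (m : ℕ) (Q : CQ V) : Prop :=
  ∀ i j : V, i ≠ j → (∑ c ∈ Finset.range (m + 1), Q i j c) ≤ 1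

/-- The axioms of an `m`-colored quiver: colors bounded by `m`, no loops,
monochromatic and skew-symmetric. -/
structure IsColoredQuiver (m : ℕ) (Q : CQ V) : Prop where
  colorBound : ∀ i j c, m < c → Q i j c = 0
  noLoops : ∀ i c, Q i i c = 0
  mono : ∀ i j c c', Q i j c ≠ 0 → c ≠ c' → Q i j c' = 0
  skew : ∀ i j c, c ≤ m → Q i j c = Q j i (m - c)

/-- Colored mutation of `Q` at the vertex `j`. -/
noncomputable def mutate (m : ℕ) (Q : CQ V) (j : V) : CQ V :=
  fun i k c =>
    if m < c then 0
    else if i = k then 0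
    else if k = j then Q i k ((c + 1) % (m + 1))
    else if i = j then Q i k ((c + m) % (m + 1))
    else
      (((Q i k c : ℤ) - ∑ t ∈ (Finset.range (m + 1)).erase c, (Q i k t : ℤ))
          + ((Q i j c : ℤ) - (if c = 0 then 0 else (Q i j (c - 1) : ℤ))) * (Q j k 0 : ℤ)
          + (Q i j m : ℤ) * ((Q j k c : ℤ) - (Q j k (c + 1) : ℤ))).toNat

/-- Mutation equivalence: `Q'` is obtained from `Q` by a finite sequence of
colored mutations. -/
def MutEquiv (m : ℕ) (Q Q' : CQ V) : Prop :=
  ∃ js : List V, Q' = js.foldl (mutate m) Q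

/-- Cyclic successor on `Fin l`. -/
def fsucc {l : ℕ} (i : Fin l) : Fin l := ⟨((i : ℕ) + 1) % l, Nat.mod_lt _ i.pos⟩

/-- There is an arrow from `i` to `j` (of some color `≤ m`). -/
def HasArrow (m : ℕ) (Q : CQ V) (i j : V) : Prop := ∃ c, c ≤ m ∧ Q i j c ≠ 0

/-- The underlying graph of a colored quiver. -/
def underlying (m : ℕ) (Q : CQ V) : SimpleGraph V where
  Adj i j := i ≠ j ∧ (HasArrow m Q i j ∨ HasArrow m Q j i)
  symm := ⟨fun i j hh => ⟨Ne.symm hh.1, hh.2.symm⟩⟩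
  loopless := ⟨fun i hh => hh.1 rfl⟩

/-- Number of neighbors of `v`. -/
noncomputable def deg (m : ℕ) (Q : CQ V) (v : V) : ℕ :=
  {u | (underlying m Q).Adj v u}.ncard

/-- A clique: any two distinct members are joined by arrows. -/
def IsClique (m : ℕ) (Q : CQ V) (s : Finset V) : Prop :=
  ∀ i ∈ s, ∀ j ∈ s, i ≠ j → HasArrow m Q i j

/-- An `m`-admissible triangle. -/
def MAdmissible (m : ℕ) (Q : CQ V) (x y z : V) : Prop :=
  ∃ a b c, a ≤ m ∧ b ≤ m ∧ c ≤ m ∧ Q x y a ≠ 0 ∧ Q y z b ≠ 0 ∧ Q z x c ≠ 0 ∧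
    (a + b + c = m - 1 ∨ a + b + c = 2 * m + 1)

/-- A hole: an induced cycle of length at least four in a graph. -/
def IsHole (G : SimpleGraph V) (n : ℕ) (v : Fin n → V) : Prop :=
  4 ≤ n ∧ Function.Injective v ∧
    ∀ i j : Fin n, G.Adj (v i) (v j) ↔ (j = fsucc i ∨ i = fsucc j)

def HoleFree (G : SimpleGraph V) : Prop := ∀ (n : ℕ) (v : Fin n → V), ¬ IsHole G n v

/-- A quiver of type `A n`: the underlying graph is a path on `n` vertices. -/
def IsTypeA (m n : ℕ) (Q : CQ V) : Prop :=
  ∃ e : Fin n ≃ V, ∀ i j : Fin n,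
    (underlying m Q).Adj (e i) (e j) ↔ ((j : ℕ) = (i : ℕ) + 1 ∨ (i : ℕ) = (j : ℕ) + 1)

/-- The class `𝒬ᵐₙ` of colored quivers of mutation type `A n`. -/
def ClassQA (m n : ℕ) {V : Type*} [Finite V] (Q : CQ V) : Prop :=
  IsColoredQuiver m Q ∧ Simple m Q ∧ Nat.card V = n ∧ (underlying m Q).Connected ∧
    HoleFree (underlying m Q) ∧
    (∀ v : V, 0 < deg m Q v →
      ∃ C B : Finset V, IsClique m Q C ∧ IsClique m Q B ∧ v ∈ C ∧ v ∈ B ∧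
        C.card + B.card = deg m Q v + 2 ∧ C.card ≤ m + 2 ∧ B.card ≤ m + 2 ∧
        ∀ i ∈ C, ∀ j ∈ B, i ≠ v → j ≠ v → ¬ HasArrow m Q i j) ∧
    (∀ x y z : V, x ≠ y → y ≠ z → x ≠ z → IsClique m Q {x, y, z} →
      MAdmissible m Q x y z)

/-- Restriction of a colored quiver to a set of vertices. -/
def CQ.restrict (Q : CQ V) (S : Set V) : CQ S := fun i j c => Q i j c

/-- The subquiver keeping only the arrows inside `S`. -/
noncomputable def keepArrows (Q : CQ V) (S : Set V) : CQ V :=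
  fun i j c => if i ∈ S ∧ j ∈ S then Q i j c else 0

/-- Delete all arrows joining vertices of the clique `C`. -/
noncomputable def delCliqueArrows (Q : CQ V) (C : Finset V) : CQ V :=
  fun i j c => if i ∈ C ∧ j ∈ C then 0 else Q i j c

/-- `C` is an almost extremal clique of `Q`: deleting its arrows leaves a
connected component of type `A k` for some `k ≥ 1`. -/
def AlmostExtremal (m : ℕ) (Q : CQ V) (C : Finset V) : Prop :=
  IsClique m Q C ∧ 3 ≤ C.card ∧
    ∃ (w : V) (k : ℕ), 1 ≤ k ∧
      IsTypeA m k (CQ.restrict (delCliqueArrows Q C)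
        {u | (underlying m (delCliqueArrows Q C)).Reachable w u})

/-- The quiver consisting of a single cycle with colors `c i` on the
arrows `i → i+1` (plus skew-symmetric reverses). -/
def cycleQuiver (m l : ℕ) (c : Fin l → ℕ) : CQ (Fin l) :=
  fun i j t =>
    (if i ≠ j ∧ j = fsucc i ∧ t = c i then 1 else 0) +
    (if i ≠ j ∧ i = fsucc j ∧ t = m - c j then 1 else 0)

/-- The quiver `Ã_{p,q}`: a cycle with `p` arrows of color `0` followed by
`q` arrows of color `m`. -/
def tildeA (m p q : ℕ) : CQ (Fin (p + q)) :=
  cycleQuiver m (p + q) (fun i => if (i : ℕ) < p then 0 else m)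

/-- `Q` is a copy of `Ã_{p,q}` on the vertex set `V`. -/
def IsTildeA (m p q : ℕ) (Q : CQ V) : Prop :=
  ∃ e : Fin (p + q) ≃ V, ∀ i j c, Q (e i) (e j) c = tildeA m p q i j c

/-- The linear quiver on `Fin l`, arrow `i → i+1` colored `c i`. -/
def pathQuiver (m l : ℕ) (c : ℕ → ℕ) : CQ (Fin l) :=
  fun i j t =>
    if (j : ℕ) = (i : ℕ) + 1 ∧ t = c (i : ℕ) then 1
    else if (i : ℕ) = (j : ℕ) + 1 ∧ t = m - c (j : ℕ) then 1 else 0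

/-- `Q` consists of a single `(l,h)`-central cycle. -/
def IsCentralCycleQuiver (m l h : ℕ) (Q : CQ V) : Prop :=
  ∃ (a : Fin l → V) (c : Fin l → ℕ), Function.Bijective a ∧ (∀ i, c i ≤ m) ∧
    (∑ i, c i = h * m) ∧ ∀ i j t, Q (a i) (a j) t = cycleQuiver m l c i j t

/-- A triangle quiver on `Fin 3` with arrows `0 →^{c1} 1`, `0 →^{c2} 2`,
`1 →^{c3} 2` (plus skew-symmetric reverses). -/
def triQ (m c1 c2 c3 : ℕ) : CQ (Fin 3) := fun i j c =>
  if i = 0 ∧ j = 1 ∧ c = c1 then 1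
  else if i = 1 ∧ j = 0 ∧ c = m - c1 then 1
  else if i = 0 ∧ j = 2 ∧ c = c2 then 1
  else if i = 2 ∧ j = 0 ∧ c = m - c2 then 1
  else if i = 1 ∧ j = 2 ∧ c = c3 then 1
  else if i = 2 ∧ j = 1 ∧ c = m - c3 then 1
  else 0

/-- Data witnessing membership of `Q` in the class `𝒬ᵐ_{p,q}`. -/
structure QpqData (m p q : ℕ) {V : Type*} [Fintype V] (Q : CQ V) where
  colored : IsColoredQuiver m Q
  cardV : Nat.card V = p + q
  conn : (underlying m Q).Connected
  l : ℕ
  h : ℕ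
  hl : 2 ≤ l
  hpos : 0 < h
  hlt : h < l
  a : Fin l → V
  col : Fin l → ℕ
  inja : Function.Injective a
  colLe : ∀ i, col i ≤ m
  arrows : ∀ i : Fin l, Q (a i) (a (fsucc i)) (col i) ≠ 0
  csum : ∑ i, col i = h * m
  induced : ∀ i j : Fin l, HasArrow m Q (a i) (a j) → (j = fsucc i ∨ i = fsucc j)
  central_unique : ∀ (l' h' : ℕ) (a' : Fin l' → V) (col' : Fin l' → ℕ),
      2 ≤ l' → 0 < h' → h' < l' → Function.Injective a' → (∀ i, col' i ≤ m) →
      (∀ i : Fin l', Q (a' i) (a' (fsucc i)) (col' i) ≠ 0) →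
      (∑ i, col' i = h' * m) →
      (∀ i j : Fin l', HasArrow m Q (a' i) (a' j) → (j = fsucc i ∨ i = fsucc j)) →
      Set.range a' = Set.range a
  double2 : l = 2 →
      (∀ c, c ≤ m → Q (a ⟨0, by omega⟩) (a ⟨1, by omega⟩) c ≠ 0 →
        Q (a ⟨0, by omega⟩) (a ⟨1, by omega⟩) c = 2) ∧
      (∀ u v : V, u ≠ v → (u ∉ Set.range a ∨ v ∉ Set.range a) →
        (∑ c ∈ Finset.range (m + 1), Q u v c) ≤ 1)
  simple3 : 3 ≤ l → Simple m Q
  holes3 : l ≤ 3 → HoleFree (underlying m Q)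
  holes4 : 4 ≤ l → ∀ (n : ℕ) (v : Fin n → V), IsHole (underlying m Q) n v →
      Set.range v = Set.range a
  vertexCliques : ∀ v : V, 0 < deg m Q v →
      ∃ Cr Bk : Finset V, IsClique m Q Cr ∧ IsClique m Q Bk ∧ v ∈ Cr ∧ v ∈ Bk ∧
        1 ≤ Cr.card ∧ Cr.card ≤ m + 2 ∧ 1 ≤ Bk.card ∧ Bk.card ≤ m + 2 ∧
        deg m Q v = Cr.card + Bk.card - 2 - (if l = 2 then 1 else 0) ∧
        (∀ u ∈ Cr, ∀ w ∈ Bk, u ≠ v → w ≠ v → u ≠ w → HasArrow m Q u w →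
          (l = 3 ∧ ({u, v, w} : Set V) = Set.range a))
  D : Fin l → Finset V
  Dclique : ∀ i, IsClique m Q (D i)
  Dmem : ∀ i : Fin l, a i ∈ D i ∧ a (fsucc i) ∈ D i
  Dcard : ∀ i, (D i).card ≤ m + 2
  Dmax : ∀ (i : Fin l) (D' : Finset V), IsClique m Q D' → a i ∈ D' →
      a (fsucc i) ∈ D' → D' ⊆ D i
  admissible : ∀ x y z : V, x ≠ y → y ≠ z → x ≠ z → IsClique m Q {x, y, z} →
      ¬ (l = 3 ∧ ({x, y, z} : Set V) = Set.range a) → MAdmissible m Q x y z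
  periph_tri : ∀ w : V, w ∉ Set.range a → ∀ i j : Fin l, w ∈ D i → w ∈ D j → i = j
  Del : CQ V
  hDel : Del = fun u v c => if ∃ i, u ∈ D i ∧ v ∈ D i then 0 else Q u v c
  nw : V → ℕ
  hnw : ∀ w : V, nw w = {u | (underlying m Del).Reachable w u}.ncard
  central_isolated : ∀ (i : Fin l) (u : V), ¬ (underlying m Del).Adj (a i) u
  periph_disj : ∀ w w' : V, w ∉ Set.range a → w' ∉ Set.range a →
      (∃ i, w ∈ D i) → (∃ i, w' ∈ D i) → w ≠ w' →
      ¬ (underlying m Del).Reachable w w'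
  periph_cover : ∀ u : V, u ∉ Set.range a →
      ∃ w : V, w ∉ Set.range a ∧ (∃ i, w ∈ D i) ∧ (underlying m Del).Reachable w u
  QwClass : ∀ w : V, w ∉ Set.range a → (∃ i, w ∈ D i) →
      ClassQA m (nw w) (CQ.restrict Del {u | (underlying m Del).Reachable w u})
  Wp : Finset V
  Wq : Finset V
  hWp : ∀ w : V, w ∈ Wp ↔ (w ∉ Set.range a ∧ ∃ (i : Fin l) (c1 c2 : ℕ),
      w ∈ D i ∧ c1 ≤ m ∧ c2 ≤ m ∧ Q (a (fsucc i)) w c1 ≠ 0 ∧ Q w (a i) c2 ≠ 0 ∧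
      col i + c1 + c2 = m - 1)
  hWq : ∀ w : V, w ∈ Wq ↔ (w ∉ Set.range a ∧ ∃ (i : Fin l) (c1 c2 : ℕ),
      w ∈ D i ∧ c1 ≤ m ∧ c2 ≤ m ∧ Q (a (fsucc i)) w c1 ≠ 0 ∧ Q w (a i) c2 ≠ 0 ∧
      col i + c1 + c2 = 2 * m + 1)
  hp : p = l - h + ∑ w ∈ Wp, nw w
  hq : q = h + ∑ w ∈ Wq, nw w

/-- Membership in the class `𝒬ᵐ_{p,q}`. -/
def ClassQpq (m p q : ℕ) {V : Type*} [Fintype V] (Q : CQ V) : Prop :=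
  Nonempty (QpqData m p q Q)

/-- `w` is a peripheral vertex. -/
def QpqData.Peripheral {m p q : ℕ} {V : Type*} [Fintype V] {Q : CQ V}
    (d : QpqData m p q Q) (w : V) : Prop :=
  w ∉ Set.range d.a ∧ ∃ i, w ∈ d.D i

/-- The connected component of `w` in the quiver obtained by deleting the
arrows of the boundary subquivers and of the central cycle. -/
def QpqData.comp {m p q : ℕ} {V : Type*} [Fintype V] {Q : CQ V}
    (d : QpqData m p q Q) (w : V) : Set V :=
  {u | (underlying m d.Del).Reachable w u}

/-- The graph of color-`0` arrows of a colored quiver. -/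
def zeroGraph (Q : CQ V) : SimpleGraph V where
  Adj i j := i ≠ j ∧ (Q i j 0 ≠ 0 ∨ Q j i 0 ≠ 0)
  symm := ⟨fun i j hh => ⟨Ne.symm hh.1, hh.2.symm⟩⟩
  loopless := ⟨fun i hh => hh.1 rfl⟩

/-- Number of color-`0` arrows of `R` inside `S` lying in no oriented
`3`-cycle of color-`0` arrows inside `S`. -/
noncomputable def zeroArrowsNoTri (R : CQ V) (S : Set V) : ℕ :=
  {uv : V × V | uv.1 ∈ S ∧ uv.2 ∈ S ∧ R uv.1 uv.2 0 ≠ 0 ∧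
    ¬ ∃ x ∈ S, R uv.2 x 0 ≠ 0 ∧ R x uv.1 0 ≠ 0}.ncard

/-- Number of oriented `3`-cycles of color-`0` arrows of `R` inside `S`. -/
noncomputable def zeroTriCount (R : CQ V) (S : Set V) : ℕ :=
  {t : Finset V | ∃ u v x : V, u ∈ S ∧ v ∈ S ∧ x ∈ S ∧ u ≠ v ∧ v ≠ x ∧ u ≠ x ∧
    t = {u, v, x} ∧ R u v 0 ≠ 0 ∧ R v x 0 ≠ 0 ∧ R x u 0 ≠ 0}.ncard

/-- Number of oriented cycles of length `k` of color-`0` arrows of `R`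
inside `S` (counted by their vertex sets). -/
noncomputable def orientKCycles (R : CQ V) (S : Set V) (k : ℕ) : ℕ :=
  {t : Finset V | ∃ v : Fin k → V, Function.Injective v ∧ (∀ i, v i ∈ S) ∧
    t = Finset.image v Finset.univ ∧ ∀ i, R (v i) (v (fsucc i)) 0 ≠ 0}.ncard



section StmtSixteenAux


lemma fin_val_lt' {l c : ℕ} (h : l = c) (i : Fin l) : (i : ℕ) < c := h ▸ i.isLt

lemma fsucc_val' {l c : ℕ} (h : l = c) (i : Fin l) :
    ((fsucc i : Fin l) : ℕ) = ((i : ℕ) + 1) % c := by subst h; rfl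

lemma skew' {m : ℕ} {Q : CQ V} (hc : IsColoredQuiver m Q) {i j : V} {c : ℕ} (hcm : c ≤ m)
    (h : Q i j c ≠ 0) : Q j i (m - c) ≠ 0 := by
  rw [← hc.skew i j c hcm]; exact h

lemma hasArrow_rev {m : ℕ} {Q : CQ V} (hc : IsColoredQuiver m Q) {i j : V}
    (h : HasArrow m Q i j) : HasArrow m Q j i := by
  obtain ⟨c, hcm, h⟩ := h
  exact ⟨m - c, Nat.sub_le _ _, skew' hc hcm h⟩

lemma mono_eq {m : ℕ} {Q : CQ V} (hc : IsColoredQuiver m Q) {i j : V} {c c' : ℕ}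
    (h : Q i j c ≠ 0) (h' : Q i j c' ≠ 0) : c = c' := by
  by_contra hne
  exact h' (hc.mono i j c c' h hne)

lemma clique3 {m : ℕ} {Q : CQ V} {x y z : V}
    (h1 : HasArrow m Q x y) (h2 : HasArrow m Q y x) (h3 : HasArrow m Q x z)
    (h4 : HasArrow m Q z x) (h5 : HasArrow m Q y z) (h6 : HasArrow m Q z y) :
    IsClique m Q ({x, y, z} : Finset V) := by
  intro i hi j hj hij
  simp only [Finset.mem_insert, Finset.mem_singleton] at hi hj
  rcases hi with rfl | rfl | rfl <;> rcases hj with rfl | rfl | rfl <;>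
    first | exact absurd rfl hij | assumption

lemma no_two_zero {m : ℕ} (hm : 1 ≤ m) {Q : CQ V} (hc : IsColoredQuiver m Q) {v x y : V}
    (hx : Q v x 0 ≠ 0) (hy : Q v y 0 ≠ 0) (had : MAdmissible m Q v x y) : False := by
  obtain ⟨a, b, c, ham, hbm, hcm, h1, h2, h3, hsum⟩ := had
  have ha0 : a = 0 := mono_eq hc h1 hx
  have h3' : Q v y (m - c) ≠ 0 := skew' hc hcm h3
  have hcm' : m - c = 0 := mono_eq hc h3' hy
  omega

lemma zero_pair {m p q : ℕ} {V : Type*} [Fintype V] {Q : CQ V} (d : QpqData m p q Q)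
    (hm : 1 ≤ m) {v x y : V} (hxv : x ≠ v) (hyv : y ≠ v) (hxy : x ≠ y)
    (h0x : Q v x 0 ≠ 0) (h0y : Q v y 0 ≠ 0) (harr : HasArrow m Q x y) :
    d.l = 3 ∧ ({v, x, y} : Set V) = Set.range d.a := by
  have hc := d.colored
  have hvx : HasArrow m Q v x := ⟨0, Nat.zero_le m, h0x⟩
  have hvy : HasArrow m Q v y := ⟨0, Nat.zero_le m, h0y⟩
  have hcl : IsClique m Q ({v, x, y} : Finset V) :=
    clique3 hvx (hasArrow_rev hc hvx) hvy (hasArrow_rev hc hvy) harr (hasArrow_rev hc harr)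
  by_contra hne
  exact no_two_zero hm hc h0x h0y
    (d.admissible v x y (Ne.symm hxv) hxy (Ne.symm hyv) hcl hne)

lemma tri_color {m p q : ℕ} {V : Type*} [Fintype V] {Q : CQ V} (d : QpqData m p q Q)
    (hm : 1 ≤ m) {v z t : V} {g : ℕ} (hg : g ≤ m)
    (hzv : z ≠ v) (htv : t ≠ v) (hzt : z ≠ t)
    (h0 : Q v z 0 ≠ 0) (ht : Q v t g ≠ 0) (hzn : z ∉ Set.range d.a)
    (hzt' : HasArrow m Q z t) :
    1 ≤ g ∧ Q z t (g - 1) ≠ 0 := by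
  have hc := d.colored
  have hvz : HasArrow m Q v z := ⟨0, Nat.zero_le m, h0⟩
  have hvt : HasArrow m Q v t := ⟨g, hg, ht⟩
  have hcl : IsClique m Q ({v, z, t} : Finset V) :=
    clique3 hvz (hasArrow_rev hc hvz) hvt (hasArrow_rev hc hvt) hzt' (hasArrow_rev hc hzt')
  have hne : ¬ (d.l = 3 ∧ ({v, z, t} : Set V) = Set.range d.a) := by
    rintro ⟨-, hset⟩
    exact hzn (hset ▸ (by simp : z ∈ ({v, z, t} : Set V)))
  obtain ⟨a, b, c, ham, hbm, hcm, h1, h2, h3, hsum⟩ :=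
    d.admissible v z t (Ne.symm hzv) hzt (Ne.symm htv) hcl hne
  have ha0 : a = 0 := mono_eq hc h1 h0
  have h3' : Q v t (m - c) ≠ 0 := skew' hc hcm h3
  have hct : m - c = g := mono_eq hc h3' ht
  have hb : 1 ≤ g ∧ b = g - 1 := by omega
  exact ⟨hb.1, hb.2 ▸ h2⟩

lemma arrowD {m p q : ℕ} {V : Type*} [Fintype V] {Q : CQ V} (d : QpqData m p q Q)
    (i : Fin d.l) (zz : V) (hne : zz ≠ d.a i) (h0 : Q (d.a i) zz 0 ≠ 0) :
    ∃ k, d.a i ∈ d.D k ∧ zz ∈ d.D k := by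
  by_contra hno
  have hdel : d.Del (d.a i) zz 0 ≠ 0 := by
    rw [d.hDel]
    show (if (∃ k, d.a i ∈ d.D k ∧ zz ∈ d.D k) then 0 else Q (d.a i) zz 0) ≠ 0
    rw [if_neg hno]
    exact h0
  exact d.central_isolated i zz ⟨Ne.symm hne, Or.inl ⟨0, Nat.zero_le m, hdel⟩⟩

lemma double2' {m p q : ℕ} {V : Type*} [Fintype V] {Q : CQ V} (d : QpqData m p q Q)
    (hl2 : d.l = 2) (j0 j1 : Fin d.l) (h0 : (j0 : ℕ) = 0) (h1 : (j1 : ℕ) = 1)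
    (c : ℕ) (hcm : c ≤ m) (hne : Q (d.a j0) (d.a j1) c ≠ 0) :
    Q (d.a j0) (d.a j1) c = 2 := by
  obtain ⟨j0v, hj0⟩ := j0
  obtain ⟨j1v, hj1⟩ := j1
  have h0' : j0v = 0 := h0
  have h1' : j1v = 1 := h1
  subst h0'
  subst h1'
  exact (d.double2 hl2).1 c hcm hne

lemma no_three {m p q : ℕ} {V : Type*} [Fintype V] {Q : CQ V} (d : QpqData m p q Q)
    (hm : 1 ≤ m) {v x y z : V}
    (hcen : ¬ (d.l = 3 ∧ v ∈ Set.range d.a))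
    (hxy : x ≠ y) (hxz : x ≠ z) (hyz : y ≠ z)
    (hx : Q v x 0 ≠ 0) (hy : Q v y 0 ≠ 0) (hz : Q v z 0 ≠ 0) : False := by
  classical
  have hc := d.colored
  have hnv : ∀ w, Q v w 0 ≠ 0 → w ≠ v := fun w hw h => by
    rw [h] at hw; exact hw (hc.noLoops v 0)
  have hxv := hnv x hx
  have hyv := hnv y hy
  have hzv := hnv z hz
  have noAdj : ∀ pp rr : V, pp ≠ v → rr ≠ v → pp ≠ rr → Q v pp 0 ≠ 0 → Q v rr 0 ≠ 0 →
      HasArrow m Q pp rr → False := by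
    intro pp rr h1 h2 h3 h4 h5 harr
    obtain ⟨hl3, hset⟩ := zero_pair d hm h1 h2 h3 h4 h5 harr
    exact hcen ⟨hl3, hset ▸ (by simp : v ∈ ({v, pp, rr} : Set V))⟩
  set Nb : Set V := {u | (underlying m Q).Adj v u} with hNb
  have hdegNb : deg m Q v = Nb.ncard := by rw [hNb]; rfl
  have hadj : ∀ u : V, u ≠ v → Q v u 0 ≠ 0 → u ∈ Nb :=
    fun u hu h => ⟨Ne.symm hu, Or.inl ⟨0, Nat.zero_le m, h⟩⟩
  have h3deg : 3 ≤ deg m Q v := by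
    have hsub : ↑({x, y, z} : Finset V) ⊆ Nb := by
      intro u hu
      simp only [Finset.coe_insert, Set.mem_insert_iff, Finset.coe_singleton,
        Set.mem_singleton_iff] at hu
      rcases hu with rfl | rfl | rfl
      exacts [hadj u hxv hx, hadj u hyv hy, hadj u hzv hz]
    have hcard : ({x, y, z} : Finset V).card = 3 :=
      Finset.card_eq_three.mpr ⟨x, y, z, hxy, hxz, hyz, rfl⟩
    calc (3 : ℕ) = (↑({x, y, z} : Finset V) : Set V).ncard := by
          rw [Set.ncard_coe_finset, hcard]
      _ ≤ Nb.ncard := Set.ncard_le_ncard hsub (Set.toFinite Nb)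
      _ = deg m Q v := hdegNb.symm
  obtain ⟨Cr, Bk, hCr, hBk, hvC, hvB, hC1, hC2, hB1, hB2, hdeg, hcl⟩ :=
    d.vertexCliques v (by omega)
  have hclause : ∀ u ∈ Cr, ∀ w ∈ Bk, u ≠ v → w ≠ v → u ≠ w → HasArrow m Q u w → False := by
    intro u hu w hw h1 h2 h3 harr
    obtain ⟨hl3, hset⟩ := hcl u hu w hw h1 h2 h3 harr
    exact hcen ⟨hl3, hset ▸ (by simp : v ∈ ({u, v, w} : Set V))⟩
  by_cases hint : ∀ u ∈ Cr ∩ Bk, u = v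
  · have hIeq : Cr ∩ Bk = {v} :=
      Finset.eq_singleton_iff_unique_mem.mpr ⟨Finset.mem_inter.mpr ⟨hvC, hvB⟩, hint⟩
    have hIcard : (Cr ∩ Bk).card = 1 := by rw [hIeq]; rfl
    have hUcard : (Cr ∪ Bk).card = Cr.card + Bk.card - 1 := by
      have := Finset.card_union_add_card_inter Cr Bk
      omega
    have hvU : v ∈ Cr ∪ Bk := Finset.mem_union_left _ hvC
    have hEsub : ↑((Cr ∪ Bk).erase v) ⊆ Nb := by
      intro u hu
      obtain ⟨hune, huU⟩ := Finset.mem_erase.mp (Finset.mem_coe.mp hu)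
      rcases Finset.mem_union.mp huU with hC | hB
      · exact ⟨Ne.symm hune, Or.inl (hCr v hvC u hC (Ne.symm hune))⟩
      · exact ⟨Ne.symm hune, Or.inl (hBk v hvB u hB (Ne.symm hune))⟩
    have hEcard : ((Cr ∪ Bk).erase v).card = Cr.card + Bk.card - 2 := by
      rw [Finset.card_erase_of_mem hvU]; omega
    have hEle : Cr.card + Bk.card - 2 ≤ deg m Q v := by
      calc Cr.card + Bk.card - 2 = (↑((Cr ∪ Bk).erase v) : Set V).ncard := by
            rw [Set.ncard_coe_finset, hEcard]
        _ ≤ Nb.ncard := Set.ncard_le_ncard hEsub (Set.toFinite Nb)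
        _ = deg m Q v := hdegNb.symm
    by_cases hl2 : d.l = 2
    · rw [if_pos hl2] at hdeg
      omega
    · rw [if_neg hl2] at hdeg
      have hmemU : ∀ w : V, w ≠ v → Q v w 0 ≠ 0 → w ∈ Cr ∪ Bk := by
        intro w hwv hw
        by_contra hnot
        have hwE : w ∉ (Cr ∪ Bk).erase v := fun h => hnot (Finset.mem_of_mem_erase h)
        have hFsub : ↑(insert w ((Cr ∪ Bk).erase v)) ⊆ Nb := by
          intro u hu
          rcases Finset.mem_insert.mp (Finset.mem_coe.mp hu) with rfl | hu'
          · exact hadj u hwv hw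
          · exact hEsub (Finset.mem_coe.mpr hu')
        have hFcard : (insert w ((Cr ∪ Bk).erase v)).card = Cr.card + Bk.card - 1 := by
          rw [Finset.card_insert_of_notMem hwE, hEcard]; omega
        have hFle : Cr.card + Bk.card - 1 ≤ deg m Q v := by
          calc Cr.card + Bk.card - 1
              = (↑(insert w ((Cr ∪ Bk).erase v)) : Set V).ncard := by
                rw [Set.ncard_coe_finset, hFcard]
            _ ≤ Nb.ncard := Set.ncard_le_ncard hFsub (Set.toFinite Nb)
            _ = deg m Q v := hdegNb.symm
        omega
      have pairC : ∀ pp rr : V, pp ∈ Cr → rr ∈ Cr → pp ≠ v → rr ≠ v → pp ≠ rr →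
          Q v pp 0 ≠ 0 → Q v rr 0 ≠ 0 → False :=
        fun pp rr hp hr h1 h2 h3 h4 h5 => noAdj pp rr h1 h2 h3 h4 h5 (hCr pp hp rr hr h3)
      have pairB : ∀ pp rr : V, pp ∈ Bk → rr ∈ Bk → pp ≠ v → rr ≠ v → pp ≠ rr →
          Q v pp 0 ≠ 0 → Q v rr 0 ≠ 0 → False :=
        fun pp rr hp hr h1 h2 h3 h4 h5 => noAdj pp rr h1 h2 h3 h4 h5 (hBk pp hp rr hr h3)
      rcases Finset.mem_union.mp (hmemU x hxv hx) with hxC | hxB <;>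
        rcases Finset.mem_union.mp (hmemU y hyv hy) with hyC | hyB <;>
          rcases Finset.mem_union.mp (hmemU z hzv hz) with hzC | hzB
      · exact pairC x y hxC hyC hxv hyv hxy hx hy
      · exact pairC x y hxC hyC hxv hyv hxy hx hy
      · exact pairC x z hxC hzC hxv hzv hxz hx hz
      · exact pairB y z hyB hzB hyv hzv hyz hy hz
      · exact pairC y z hyC hzC hyv hzv hyz hy hz
      · exact pairB x z hxB hzB hxv hzv hxz hx hz
      · exact pairB x y hxB hyB hxv hyv hxy hx hy
      · exact pairB x y hxB hyB hxv hyv hxy hx hy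
  · push_neg at hint
    obtain ⟨u, huI, huv⟩ := hint
    obtain ⟨huC, huB⟩ := Finset.mem_inter.mp huI
    have hBsub : Bk ⊆ {v, u} := by
      intro w hw
      by_contra hwm
      simp only [Finset.mem_insert, Finset.mem_singleton, not_or] at hwm
      exact hclause u huC w hw huv hwm.1 (fun h => hwm.2 h.symm)
        (hBk u huB w hw (fun h => hwm.2 h.symm))
    have hCsub : Cr ⊆ {v, u} := by
      intro w hw
      by_contra hwm
      simp only [Finset.mem_insert, Finset.mem_singleton, not_or] at hwm
      exact hclause w hw u huB hwm.1 huv hwm.2 (hCr w hw u huC hwm.2)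
    have h2C : Cr.card ≤ 2 :=
      le_trans (Finset.card_le_card hCsub) ((Finset.card_insert_le v {u}).trans (by simp))
    have h2B : Bk.card ≤ 2 :=
      le_trans (Finset.card_le_card hBsub) ((Finset.card_insert_le v {u}).trans (by simp))
    by_cases hl2 : d.l = 2
    · rw [if_pos hl2] at hdeg; omega
    · rw [if_neg hl2] at hdeg; omega

end StmtSixteenAux

/-- in `𝒬ᵐ_{p,q}`, every vertex has at most two outgoing
arrows of color `0`, counted with multiplicity. -/
theorem stmt16 {V : Type*} [Fintype V] (m p q : ℕ) (hm : 1 ≤ m) (hp : 1 ≤ p)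
    (hq : 1 ≤ q) (Q : CQ V) (hQ : ClassQpq m p q Q) (v : V) :
    (∑ j : V, Q v j 0) ≤ 2 := by
  classical
  obtain ⟨d⟩ := hQ
  have hc := d.colored
  have hdl := d.hl
  have hnv : ∀ w, Q v w 0 ≠ 0 → w ≠ v := fun w hw h => by
    rw [h] at hw; exact hw (hc.noLoops v 0)
  set N : Finset V := Finset.univ.filter (fun j => Q v j 0 ≠ 0) with hN
  have hsumN : (∑ j : V, Q v j 0) = ∑ j ∈ N, Q v j 0 := by
    refine (Finset.sum_subset (Finset.filter_subset _ _) ?_).symm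
    intro j _ hj
    by_contra h
    exact hj (Finset.mem_filter.mpr ⟨Finset.mem_univ j, h⟩)
  have bound2 : (∀ j, Q v j 0 ≤ 1) →
      (∀ x y z : V, x ≠ y → x ≠ z → y ≠ z →
        Q v x 0 ≠ 0 → Q v y 0 ≠ 0 → Q v z 0 ≠ 0 → False) →
      (∑ j : V, Q v j 0) ≤ 2 := by
    intro h1 h3
    rw [hsumN]
    have hcard : N.card ≤ 2 := by
      by_contra hgt
      push_neg at hgt
      obtain ⟨x, y, z, hx, hy, hz, hxy, hxz, hyz⟩ := Finset.two_lt_card_iff.mp hgt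
      rw [hN, Finset.mem_filter] at hx hy hz
      exact h3 x y z hxy hxz hyz hx.2 hy.2 hz.2
    calc ∑ j ∈ N, Q v j 0 ≤ ∑ _j ∈ N, 1 := Finset.sum_le_sum fun j _ => h1 j
      _ = N.card := by simp
      _ ≤ 2 := hcard
  by_cases hl2 : d.l = 2
  · -- the case of two central vertices
    by_cases hvcen : v ∈ Set.range d.a
    · obtain ⟨i, hvi⟩ := hvcen
      have hival : (i : ℕ) < 2 := fin_val_lt' hl2 i
      have hfsval : ((fsucc i : Fin d.l) : ℕ) = ((i : ℕ) + 1) % 2 := fsucc_val' hl2 i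
      set u := d.a (fsucc i) with hudef
      have hfsne : fsucc i ≠ i := by
        intro h; have := congrArg Fin.val h; rw [hfsval] at this; omega
      have huv : u ≠ v := by
        rw [hudef, ← hvi]; exact fun h => hfsne (d.inja h)
      have hrange2 : ∀ w, w ∈ Set.range d.a → w = v ∨ w = u := by
        rintro w ⟨t, rfl⟩
        have htval : (t : ℕ) < 2 := fin_val_lt' hl2 t
        by_cases ht : (t : ℕ) = (i : ℕ)
        · left; rw [← hvi]; exact congrArg d.a (Fin.ext ht)
        · right; rw [hudef]; refine congrArg d.a (Fin.ext ?_); rw [hfsval]; omega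
      have huDk : ∀ k : Fin d.l, v ∈ d.D k ∧ u ∈ d.D k := by
        intro k
        have hkval : (k : ℕ) < 2 := fin_val_lt' hl2 k
        have hfsk : ((fsucc k : Fin d.l) : ℕ) = ((k : ℕ) + 1) % 2 := fsucc_val' hl2 k
        obtain ⟨h1, h2⟩ := d.Dmem k
        by_cases hk : (k : ℕ) = (i : ℕ)
        · have e1 : d.a k = v := by rw [← hvi]; exact congrArg d.a (Fin.ext hk)
          have e2 : d.a (fsucc k) = u := by
            rw [hudef]; refine congrArg d.a (Fin.ext ?_); rw [hfsk, hfsval]; omega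
          exact ⟨e1 ▸ h1, e2 ▸ h2⟩
        · have e1 : d.a k = u := by
            rw [hudef]; refine congrArg d.a (Fin.ext ?_); rw [hfsval]; omega
          have e2 : d.a (fsucc k) = v := by
            rw [← hvi]; refine congrArg d.a (Fin.ext ?_); rw [hfsk]; omega
          exact ⟨e2 ▸ h2, e1 ▸ h1⟩
      by_cases hQvu : Q v u 0 = 0
      · refine bound2 ?_ ?_
        · intro j
          by_cases hjv : j = v
          · simp [hjv, hc.noLoops v 0]
          · by_cases hjr : j ∈ Set.range d.a
            · rcases hrange2 j hjr with rfl | rfl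
              · exact absurd rfl hjv
              · rw [hQvu]; omega
            · have hle := (d.double2 hl2).2 v j (fun h => hjv h.symm) (Or.inr hjr)
              calc Q v j 0 ≤ ∑ c ∈ Finset.range (m + 1), Q v j c :=
                    Finset.single_le_sum (fun _ _ => Nat.zero_le _)
                      (Finset.mem_range.mpr (by omega))
                _ ≤ 1 := hle
        · intro x y z hxy hxz hyz hx hy hz
          refine no_three d hm ?_ hxy hxz hyz hx hy hz
          rintro ⟨h3, -⟩; omega
      · -- double arrow of color 0 to the other central vertex
        have hNu : ∀ j : V, j ≠ u → Q v j 0 = 0 := by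
          intro j hju
          by_contra hj
          have hjv : j ≠ v := hnv j hj
          obtain ⟨k, hvk, hjk⟩ := arrowD d i j (by rw [hvi]; exact hjv) (by rw [hvi]; exact hj)
          obtain ⟨-, huk⟩ := huDk k
          have harr : HasArrow m Q u j := d.Dclique k u huk j hjk (Ne.symm hju)
          obtain ⟨h3, -⟩ := zero_pair d hm huv hjv (Ne.symm hju) hQvu hj harr
          omega
        rw [Finset.sum_eq_single u (fun j _ hj => hNu j hj)
          (fun h => absurd (Finset.mem_univ u) h)]
        by_cases hiv0 : (i : ℕ) = 0
        · have h2 := double2' d hl2 i (fsucc i) hiv0 (by rw [hfsval]; omega) 0 (Nat.zero_le m)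
            (by rw [hvi, ← hudef]; exact hQvu)
          rw [hvi, ← hudef] at h2
          omega
        · have hiv1 : (i : ℕ) = 1 := by omega
          have hfs0 : ((fsucc i : Fin d.l) : ℕ) = 0 := by rw [hfsval]; omega
          have hskew : Q v u 0 = Q u v m := by
            have := hc.skew v u 0 (Nat.zero_le m); simpa using this
          have harg : Q (d.a (fsucc i)) (d.a i) m ≠ 0 := by
            rw [hvi, ← hudef, ← hskew]; exact hQvu
          have h2 := double2' d hl2 (fsucc i) i hfs0 hiv1 m le_rfl harg
          rw [hvi, ← hudef] at h2
          omega
    · -- non-central vertex, l = 2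
      refine bound2 ?_ ?_
      · intro j
        by_cases hjv : j = v
        · simp [hjv, hc.noLoops v 0]
        · have hle := (d.double2 hl2).2 v j (fun h => hjv h.symm) (Or.inl hvcen)
          calc Q v j 0 ≤ ∑ c ∈ Finset.range (m + 1), Q v j c :=
                Finset.single_le_sum (fun _ _ => Nat.zero_le _)
                  (Finset.mem_range.mpr (by omega))
            _ ≤ 1 := hle
      · intro x y z hxy hxz hyz hx hy hz
        refine no_three d hm ?_ hxy hxz hyz hx hy hz
        rintro ⟨h3, -⟩; omega
  · -- l ≥ 3 : the quiver is simple
    have hl3' : 3 ≤ d.l := by omega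
    have hsimple := d.simple3 hl3'
    have mult : ∀ j : V, Q v j 0 ≤ 1 := by
      intro j
      by_cases hjv : j = v
      · simp [hjv, hc.noLoops v 0]
      · calc Q v j 0 ≤ ∑ c ∈ Finset.range (m + 1), Q v j c :=
              Finset.single_le_sum (fun _ _ => Nat.zero_le _)
                (Finset.mem_range.mpr (by omega))
          _ ≤ 1 := hsimple v j (fun h => hjv h.symm)
    by_cases hl3c : d.l = 3 ∧ v ∈ Set.range d.a
    · -- central vertex of the central triangle
      obtain ⟨hl3, i, hvi⟩ := hl3c
      refine bound2 mult ?_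
      intro x y z hxy hxz hyz hx hy hz
      have hxv := hnv x hx
      have hyv := hnv y hy
      have hzv := hnv z hz
      obtain ⟨i1, hi1⟩ : ∃ t, t = fsucc i := ⟨_, rfl⟩
      obtain ⟨i2, hi2⟩ : ∃ t, t = fsucc i1 := ⟨_, rfl⟩
      have hilt : (i : ℕ) < 3 := fin_val_lt' hl3 i
      have hv1 : (i1 : ℕ) = ((i : ℕ) + 1) % 3 := by
        rw [hi1]; exact fsucc_val' hl3 i
      have hv2 : (i2 : ℕ) = ((i1 : ℕ) + 1) % 3 := by
        rw [hi2]; exact fsucc_val' hl3 i1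
      have hii1 : i ≠ i1 := by intro h; have := congrArg Fin.val h; omega
      have hii2 : i ≠ i2 := by intro h; have := congrArg Fin.val h; omega
      have hi12 : i1 ≠ i2 := by intro h; have := congrArg Fin.val h; omega
      have hfs2 : fsucc i2 = i := by
        refine Fin.ext ?_
        rw [fsucc_val' hl3 i2]; omega
      have htri : ∀ t : Fin d.l, t = i ∨ t = i1 ∨ t = i2 := by
        intro t
        have h4 : (t : ℕ) < 3 := fin_val_lt' hl3 t
        by_cases e1 : (t : ℕ) = (i : ℕ)
        · exact Or.inl (Fin.ext e1)
        by_cases e2 : (t : ℕ) = (i1 : ℕ)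
        · exact Or.inr (Or.inl (Fin.ext e2))
        exact Or.inr (Or.inr (Fin.ext (by omega)))
      -- central arrows
      have hA01 : Q v (d.a i1) (d.col i) ≠ 0 := by
        rw [← hvi, hi1]; exact d.arrows i
      have hA12 : Q (d.a i1) (d.a i2) (d.col i1) ≠ 0 := by
        rw [hi2]; exact d.arrows i1
      have hA20 : Q (d.a i2) v (d.col i2) ≠ 0 := by
        have := d.arrows i2
        rw [hfs2, hvi] at this; exact this
      have hA02 : Q v (d.a i2) (m - d.col i2) ≠ 0 := skew' hc (d.colLe i2) hA20
      have ha1v : d.a i1 ≠ v := by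
        rw [← hvi]; exact fun h => hii1 (d.inja h).symm
      have ha2v : d.a i2 ≠ v := by
        rw [← hvi]; exact fun h => hii2 (d.inja h).symm
      -- every central vertex lies in the clique of every central pair
      have hcc : ∀ s t : Fin d.l, s ≠ t → HasArrow m Q (d.a s) (d.a t) := by
        intro s t hst
        have hs3 : (s : ℕ) < 3 := fin_val_lt' hl3 s
        have ht3 : (t : ℕ) < 3 := fin_val_lt' hl3 t
        have hstv : (s : ℕ) ≠ (t : ℕ) := fun h => hst (Fin.ext h)
        by_cases hcase : (t : ℕ) = ((s : ℕ) + 1) % 3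
        · have he : t = fsucc s := by
            refine Fin.ext ?_
            rw [fsucc_val' hl3 s]; exact hcase
          rw [he]
          exact ⟨d.col s, d.colLe s, d.arrows s⟩
        · have he : s = fsucc t := by
            refine Fin.ext ?_
            rw [fsucc_val' hl3 t]; omega
          rw [he]
          exact hasArrow_rev hc ⟨d.col t, d.colLe t, d.arrows t⟩
      have hkfs : ∀ k : Fin d.l, k ≠ fsucc k := by
        intro k h
        have hk3 : (k : ℕ) < 3 := fin_val_lt' hl3 k
        have := congrArg Fin.val h
        have hv : ((fsucc k : Fin d.l) : ℕ) = ((k : ℕ) + 1) % 3 := fsucc_val' hl3 k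
        omega
      have hcinD : ∀ t k : Fin d.l, d.a t ∈ d.D k := by
        intro t k
        by_cases h1 : t = k
        · rw [h1]; exact (d.Dmem k).1
        by_cases h2 : t = fsucc k
        · rw [h2]; exact (d.Dmem k).2
        · refine d.Dmax k {d.a k, d.a (fsucc k), d.a t} ?_ (by simp) (by simp) (by simp)
          exact clique3 (hcc k (fsucc k) (hkfs k)) (hcc (fsucc k) k (Ne.symm (hkfs k)))
            (hcc k t (fun h => h1 h.symm))
            (hcc t k h1) (hcc (fsucc k) t (fun h => h2 h.symm))
            (hcc t (fsucc k) h2)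
      have claimB : ∀ w1 w2 : V, Q v w1 0 ≠ 0 → Q v w2 0 ≠ 0 → w1 ∉ Set.range d.a →
          w2 ∈ Set.range d.a → False := by
        intro w1 w2 h1 h2 hn hr
        obtain ⟨t, ht⟩ := hr
        obtain ⟨k, hvD, h1D⟩ := arrowD d i w1 (by rw [hvi]; exact hnv w1 h1)
          (by rw [hvi]; exact h1)
        have h2D : w2 ∈ d.D k := ht ▸ hcinD t k
        have hne12 : w2 ≠ w1 := fun h => hn (h ▸ ⟨t, ht⟩)
        have harr := d.Dclique k w2 h2D w1 h1D hne12
        obtain ⟨-, hset⟩ := zero_pair d hm (hnv w2 h2) (hnv w1 h1) hne12 h2 h1 harr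
        exact hn (hset ▸ (by simp : w1 ∈ ({v, w2, w1} : Set V)))
      have claimA : ¬ (x ∈ Set.range d.a ∧ y ∈ Set.range d.a ∧ z ∈ Set.range d.a) := by
        rintro ⟨⟨tx, hxe⟩, ⟨ty, hye⟩, ⟨tz, hze⟩⟩
        have htx3 : (tx : ℕ) < 3 := fin_val_lt' hl3 tx
        have hty3 : (ty : ℕ) < 3 := fin_val_lt' hl3 ty
        have htz3 : (tz : ℕ) < 3 := fin_val_lt' hl3 tz
        have e1 : (tx : ℕ) ≠ (i : ℕ) := fun h => hxv (by rw [← hxe, ← hvi]; exact congrArg d.a (Fin.ext h))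
        have e2 : (ty : ℕ) ≠ (i : ℕ) := fun h => hyv (by rw [← hye, ← hvi]; exact congrArg d.a (Fin.ext h))
        have e3 : (tz : ℕ) ≠ (i : ℕ) := fun h => hzv (by rw [← hze, ← hvi]; exact congrArg d.a (Fin.ext h))
        have e4 : (tx : ℕ) ≠ (ty : ℕ) := fun h => hxy (by rw [← hxe, ← hye]; exact congrArg d.a (Fin.ext h))
        have e5 : (tx : ℕ) ≠ (tz : ℕ) := fun h => hxz (by rw [← hxe, ← hze]; exact congrArg d.a (Fin.ext h))
        have e6 : (ty : ℕ) ≠ (tz : ℕ) := fun h => hyz (by rw [← hye, ← hze]; exact congrArg d.a (Fin.ext h))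
        omega
      by_cases hcx : x ∈ Set.range d.a
      · by_cases hcy : y ∈ Set.range d.a
        · by_cases hcz : z ∈ Set.range d.a
          · exact claimA ⟨hcx, hcy, hcz⟩
          · exact claimB z x hz hx hcz hcx
        · exact claimB y x hy hx hcy hcx
      by_cases hcy : y ∈ Set.range d.a
      · exact claimB x y hx hy hcx hcy
      by_cases hcz : z ∈ Set.range d.a
      · exact claimB x z hx hz hcx hcz
      -- all three targets are peripheral, in three distinct boundary cliques
      obtain ⟨kx, hvkx, hxkx⟩ := arrowD d i x (by rw [hvi]; exact hxv) (by rw [hvi]; exact hx)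
      obtain ⟨ky, hvky, hyky⟩ := arrowD d i y (by rw [hvi]; exact hyv) (by rw [hvi]; exact hy)
      obtain ⟨kz, hvkz, hzkz⟩ := arrowD d i z (by rw [hvi]; exact hzv) (by rw [hvi]; exact hz)
      have hsame : ∀ (w1 w2 : V) (k : Fin d.l), Q v w1 0 ≠ 0 → Q v w2 0 ≠ 0 → w1 ≠ w2 →
          w1 ∉ Set.range d.a → w1 ∈ d.D k → w2 ∈ d.D k → False := by
        intro w1 w2 k h1 h2 h12 hn hD1 hD2
        have harr := d.Dclique k w1 hD1 w2 hD2 h12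
        obtain ⟨-, hset⟩ := zero_pair d hm (hnv w1 h1) (hnv w2 h2) h12 h1 h2 harr
        exact hn (hset ▸ (by simp : w1 ∈ ({v, w1, w2} : Set V)))
      have hkxy : kx ≠ ky := fun h => hsame x y kx hx hy hxy hcx hxkx (h ▸ hyky)
      have hkxz : kx ≠ kz := fun h => hsame x z kx hx hz hxz hcx hxkx (h ▸ hzkz)
      have hkyz : ky ≠ kz := fun h => hsame y z ky hy hz hyz hcy hyky (h ▸ hzkz)
      have hcover : ∀ t : Fin d.l, ∃ w : V, Q v w 0 ≠ 0 ∧ w ∉ Set.range d.a ∧ w ∈ d.D t := by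
        intro t
        have ht3 : (t : ℕ) < 3 := fin_val_lt' hl3 t
        have hkx3 : (kx : ℕ) < 3 := fin_val_lt' hl3 kx
        have hky3 : (ky : ℕ) < 3 := fin_val_lt' hl3 ky
        have hkz3 : (kz : ℕ) < 3 := fin_val_lt' hl3 kz
        have d1 : (kx : ℕ) ≠ (ky : ℕ) := fun h => hkxy (Fin.ext h)
        have d2 : (kx : ℕ) ≠ (kz : ℕ) := fun h => hkxz (Fin.ext h)
        have d3 : (ky : ℕ) ≠ (kz : ℕ) := fun h => hkyz (Fin.ext h)
        have : (t : ℕ) = (kx : ℕ) ∨ (t : ℕ) = (ky : ℕ) ∨ (t : ℕ) = (kz : ℕ) := by omega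
        rcases this with h | h | h
        · exact ⟨x, hx, hcx, (Fin.ext h : t = kx) ▸ hxkx⟩
        · exact ⟨y, hy, hcy, (Fin.ext h : t = ky) ▸ hyky⟩
        · exact ⟨z, hz, hcz, (Fin.ext h : t = kz) ▸ hzkz⟩
      obtain ⟨w0, hw0N, hw0P, hw0D⟩ := hcover i
      obtain ⟨w1, hw1N, hw1P, hw1D⟩ := hcover i1
      obtain ⟨w2, hw2N, hw2P, hw2D⟩ := hcover i2
      -- boundary clique memberships of central vertices
      have ha1Di : d.a i1 ∈ d.D i := by rw [hi1]; exact (d.Dmem i).2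
      have ha1Di1 : d.a i1 ∈ d.D i1 := (d.Dmem i1).1
      have ha2Di1 : d.a i2 ∈ d.D i1 := by rw [hi2]; exact (d.Dmem i1).2
      have ha2Di2 : d.a i2 ∈ d.D i2 := (d.Dmem i2).1
      -- triangle constraints
      have hT1 := tri_color d hm (d.colLe i) (hnv w0 hw0N) ha1v
        (fun h => hw0P ⟨i1, h.symm⟩) hw0N hA01 hw0P
        (d.Dclique i w0 hw0D (d.a i1) ha1Di (fun h => hw0P ⟨i1, h.symm⟩))
      have hT2 := tri_color d hm (Nat.sub_le m (d.col i2)) (hnv w2 hw2N) ha2v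
        (fun h => hw2P ⟨i2, h.symm⟩) hw2N hA02 hw2P
        (d.Dclique i2 w2 hw2D (d.a i2) ha2Di2 (fun h => hw2P ⟨i2, h.symm⟩))
      have hT3a := tri_color d hm (d.colLe i) (hnv w1 hw1N) ha1v
        (fun h => hw1P ⟨i1, h.symm⟩) hw1N hA01 hw1P
        (d.Dclique i1 w1 hw1D (d.a i1) ha1Di1 (fun h => hw1P ⟨i1, h.symm⟩))
      have hT3b := tri_color d hm (Nat.sub_le m (d.col i2)) (hnv w1 hw1N) ha2v
        (fun h => hw1P ⟨i2, h.symm⟩) hw1N hA02 hw1P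
        (d.Dclique i1 w1 hw1D (d.a i2) ha2Di1 (fun h => hw1P ⟨i2, h.symm⟩))
      obtain ⟨hcolpos, hb1⟩ := hT3a
      obtain ⟨hcol2lt, hb2⟩ := hT3b
      -- the final, non-admissible triangle
      have hclD : IsClique m Q ({d.a i1, w1, d.a i2} : Finset V) := by
        intro r hr s hs hrs
        have hsub : ({d.a i1, w1, d.a i2} : Finset V) ⊆ d.D i1 := by
          intro e he
          simp only [Finset.mem_insert, Finset.mem_singleton] at he
          rcases he with rfl | rfl | rfl
          exacts [ha1Di1, hw1D, ha2Di1]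
        exact d.Dclique i1 r (hsub hr) s (hsub hs) hrs
      have hnexc : ¬ (d.l = 3 ∧ ({d.a i1, w1, d.a i2} : Set V) = Set.range d.a) := by
        rintro ⟨-, hset⟩
        exact hw1P (hset ▸ (by simp : w1 ∈ ({d.a i1, w1, d.a i2} : Set V)))
      have hne1w : d.a i1 ≠ w1 := fun h => hw1P ⟨i1, h⟩
      have hnew2 : w1 ≠ d.a i2 := fun h => hw1P ⟨i2, h.symm⟩
      have hne12' : d.a i1 ≠ d.a i2 := fun h => hi12 (d.inja h)
      obtain ⟨A, B, C, hAm, hBm, hCm, hQ1, hQ2, hQ3, hS⟩ :=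
        d.admissible (d.a i1) w1 (d.a i2) hne1w hnew2 hne12' hclD hnexc
      have hA : A = m - (d.col i - 1) :=
        mono_eq hc hQ1 (skew' hc (le_trans (Nat.sub_le (d.col i) 1) (d.colLe i)) hb1)
      have hB : B = m - d.col i2 - 1 := mono_eq hc hQ2 hb2
      have hC : C = m - d.col i1 :=
        mono_eq hc hQ3 (skew' hc (d.colLe i1) hA12)
      -- color sum of the central cycle
      have huniv : (Finset.univ : Finset (Fin d.l)) = {i, i1, i2} := by
        ext t
        simp only [Finset.mem_univ, true_iff, Finset.mem_insert, Finset.mem_singleton]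
        exact htri t
      have hsum3 : d.col i + d.col i1 + d.col i2 = d.h * m := by
        have hcs := d.csum
        rw [huniv, Finset.sum_insert (by simp [hii1, hii2]),
          Finset.sum_insert (by simp [hi12]), Finset.sum_singleton] at hcs
        omega
      have hh : d.h = 1 ∨ d.h = 2 := by
        have := d.hpos; have := d.hlt; omega
      have hci := d.colLe i
      have hci1 := d.colLe i1
      have hci2 := d.colLe i2
      rcases hh with hh | hh <;> rw [hh] at hsum3 <;> omega
    · -- generic case
      refine bound2 mult ?_
      intro x y z hxy hxz hyz hx hy hz
      exact no_three d hm hl3c hxy hxz hyz hx hy hz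

end CM
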